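/- Let (X,κ) be a connected digital image and let Y ⊂ X. Let 𝒴 = { B ∈ K(X,κ') : B ∩ Y ≠ ∅ }. If Y disconnects (X,κ) (i.e., X \ Y is not κ-connected), then 𝒴 disconnects K(X,κ') (i.e., K(X,κ') \ 𝒴 is not κ'-connected). -/
import Mathlib


/-- `a` and `b` are adjacent or equal ("⟷≤") with respect to adjacency relation `α`. -/
def AdjEq {A : Type*} (α : A → A → Prop) (a b : A) : Prop := α a b ∨ a = b

/-- `f : (X,κ) → (Y,lam)` is digitally continuous: adjacency is sent to
adjacency-or-equality. -/
def DigCont {X Y : Type*} (κ : X → X → Prop) (lam : Y → Y → Prop) (f : X → Y) : Prop :=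
  ∀ x x', κ x x' → AdjEq lam (f x) (f x')

/-- Continuity of `f` relative to carrier sets: `f` maps `S` into `T` and sends
`α`-adjacent elements of `S` to `β`-adjacent-or-equal elements. -/
def ContOn {A B : Type*} (α : A → A → Prop) (β : B → B → Prop)
    (S : Set A) (T : Set B) (f : A → B) : Prop :=
  (∀ a ∈ S, f a ∈ T) ∧ ∀ a ∈ S, ∀ a' ∈ S, α a a' → AdjEq β (f a) (f a')

/-- The hyperspace adjacency `κ'`: distinct `A, B` are adjacent iff every point of `A`
is adjacent-or-equal to some point of `B` and vice versa. -/
def HyperAdj {X : Type*} (κ : X → X → Prop) (A B : Finset X) : Prop :=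
  A ≠ B ∧ (∀ a ∈ A, ∃ b ∈ B, AdjEq κ a b) ∧ ∀ b ∈ B, ∃ a ∈ A, AdjEq κ b a

/-- A subset `S` is connected w.r.t. adjacency `α`: any two of its points are joined by
a path (finite sequence of consecutively adjacent-or-equal points) lying in `S`. -/
def ConnIn {A : Type*} (α : A → A → Prop) (S : Set A) : Prop :=
  ∀ a ∈ S, ∀ b ∈ S, ∃ (n : ℕ) (p : ℕ → A), p 0 = a ∧ p n = b ∧
    (∀ i ≤ n, p i ∈ S) ∧ ∀ i < n, AdjEq α (p i) (p (i + 1))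

/-- `a` and `b` are joined by a path lying in `S` (i.e. they are in the same
connected component of the graph induced on `S`). -/
def Chain {A : Type*} (α : A → A → Prop) (S : Set A) (a b : A) : Prop :=
  ∃ (n : ℕ) (p : ℕ → A), p 0 = a ∧ p n = b ∧
    (∀ i ≤ n, p i ∈ S) ∧ ∀ i < n, AdjEq α (p i) (p (i + 1))

/-- The carrier of the hyperspace `2^X`: nonempty finite subsets of `X`. -/
def TwoX (X : Type*) : Set (Finset X) := {A | A.Nonempty}

/-- The carrier of `K(X,κ')`: nonempty finite κ-connected subsets of `X`. -/
def KSet {X : Type*} (κ : X → X → Prop) : Set (Finset X) :=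
  {A | A.Nonempty ∧ ConnIn κ (A : Set X)}

/-- A digital homotopy from `f` to `g`, relative to carriers `S`, `T`:
a function `F : S × [0,m] → T` with `F(·,0) = f`, `F(·,m) = g`, all tracks
`t ↦ F(a,t)` are paths, and all time slices `a ↦ F(a,t)` are continuous. -/
def HtpyOn {A B : Type*} (α : A → A → Prop) (β : B → B → Prop)
    (S : Set A) (T : Set B) (f g : A → B) : Prop :=
  ∃ (m : ℕ) (F : A → ℕ → B),
    (∀ a ∈ S, ∀ t ≤ m, F a t ∈ T) ∧
    (∀ a ∈ S, F a 0 = f a) ∧ (∀ a ∈ S, F a m = g a) ∧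
    (∀ a ∈ S, ∀ t < m, AdjEq β (F a t) (F a (t + 1))) ∧
    (∀ t ≤ m, ∀ a ∈ S, ∀ a' ∈ S, α a a' → AdjEq β (F a t) (F a' t))

/-- A digital homotopy from `f` to `g` in exactly `m` steps (on full types). -/
def HtpyN {X Y : Type*} (κ : X → X → Prop) (lam : Y → Y → Prop)
    (f g : X → Y) (m : ℕ) : Prop :=
  ∃ F : X → ℕ → Y,
    (∀ x, F x 0 = f x) ∧ (∀ x, F x m = g x) ∧
    (∀ x, ∀ t < m, AdjEq lam (F x t) (F x (t + 1))) ∧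
    (∀ t ≤ m, DigCont κ lam fun x => F x t)

/-- `f` and `g` are digitally homotopic. -/
def Htpy {X Y : Type*} (κ : X → X → Prop) (lam : Y → Y → Prop) (f g : X → Y) : Prop :=
  ∃ m, HtpyN κ lam f g m

/-- The graphs on carriers `S` and `T` have the same homotopy type. -/
def HtpyEquivOn {A B : Type*} (α : A → A → Prop) (β : B → B → Prop)
    (S : Set A) (T : Set B) : Prop :=
  ∃ (f : A → B) (g : B → A),
    ContOn α β S T f ∧ ContOn β α T S g ∧
    HtpyOn α α S S (g ∘ f) id ∧ HtpyOn β β T T (f ∘ g) id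

/-- The graph on carrier `S` is contractible: the identity is homotopic to a constant. -/
def ContractibleOn {A : Type*} (α : A → A → Prop) (S : Set A) : Prop :=
  ∃ c ∈ S, HtpyOn α α S S id fun _ => c

/-- `Φ`-adjacency of functions: `f ≠ g` and `f(x) ⟷≤ g(x)` for all `x`. -/
def PhiAdj {X Y : Type*} (lam : Y → Y → Prop) (f g : X → Y) : Prop :=
  f ≠ g ∧ ∀ x, AdjEq lam (f x) (g x)

/-- `Ψ`-adjacency of functions: `f ≠ g` and `x₀ ⟷≤ x₁` implies `f(x₀) ⟷≤ g(x₁)`. -/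
def PsiAdj {X Y : Type*} (κ : X → X → Prop) (lam : Y → Y → Prop) (f g : X → Y) : Prop :=
  f ≠ g ∧ ∀ x₀ x₁, AdjEq κ x₀ x₁ → AdjEq lam (f x₀) (g x₁)

/-- `C` is a connected component of the graph induced on the vertex set `V`:
a maximal connected subset of `V`. -/
def IsComponentIn {A : Type*} (α : A → A → Prop) (V C : Set A) : Prop :=
  C ⊆ V ∧ ConnIn α C ∧ ∀ C' : Set A, C' ⊆ V → ConnIn α C' → C ⊆ C' → C' = C



lemma chain_refl {A : Type*} (α : A → A → Prop) {S : Set A} {a : A} (ha : a ∈ S) :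
    Chain α S a a :=
  ⟨0, fun _ => a, rfl, rfl, fun _ _ => ha, fun i h => absurd h (Nat.not_lt_zero i)⟩

lemma chain_snoc {A : Type*} {α : A → A → Prop} {S : Set A} {a b c : A}
    (h : Chain α S a b) (hc : c ∈ S) (hbc : AdjEq α b c) : Chain α S a c := by
  obtain ⟨n, p, hp0, hpn, hmem, hadj⟩ := h
  refine ⟨n + 1, fun i => if i ≤ n then p i else c, ?_, ?_, ?_, ?_⟩
  · simp [Nat.zero_le, hp0]
  · simp
  · intro i hi
    by_cases h' : i ≤ n <;> simp [h', hmem i, hc]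
  · intro i hi
    rcases Nat.lt_or_ge i n with h' | h'
    · have h1 : i ≤ n := le_of_lt h'
      have h2 : i + 1 ≤ n := h'
      simpa [h1, h2] using hadj i h'
    · have hin : i = n := le_antisymm (Nat.lt_succ_iff.mp hi) h'
      subst hin
      simpa [hpn] using hbc

/-- if `Y` disconnects a connected digital image `(X,κ)`, then
`𝒴 = {B ∈ K(X,κ') : B ∩ Y ≠ ∅}` disconnects `K(X,κ')`. -/
theorem stmt16 {X : Type*}
    (κ : X → X → Prop)
    (hκsymm : ∀ x y, κ x y → κ y x) (hκirr : ∀ x, ¬ κ x x)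
    (hXconn : ConnIn κ (Set.univ : Set X))
    (Y : Set X) (hY : ¬ ConnIn κ Yᶜ) :
    ¬ ConnIn (HyperAdj κ)
        (KSet κ \ {B : Finset X | B ∈ KSet κ ∧ ((B : Set X) ∩ Y).Nonempty}) := by
  intro hConn
  unfold ConnIn at hY
  push_neg at hY
  obtain ⟨a, ha, b, hb, hnochain⟩ := hY
  -- singletons are in KSet κ
  have hsing : ∀ x : X, ({x} : Finset X) ∈ KSet κ := by
    intro x
    refine ⟨Finset.singleton_nonempty x, ?_⟩
    intro u hu v hv
    simp only [Finset.coe_singleton, Set.mem_singleton_iff] at hu hv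
    exact ⟨0, fun _ => u, rfl, by rw [hu, hv], fun _ _ => by simp [hu],
      fun i h => absurd h (Nat.not_lt_zero i)⟩
  have hmemS : ∀ x : X, x ∈ Yᶜ →
      ({x} : Finset X) ∈ (KSet κ \ {B : Finset X | B ∈ KSet κ ∧ ((B : Set X) ∩ Y).Nonempty}) := by
    intro x hx
    refine ⟨hsing x, ?_⟩
    rintro ⟨-, z, hz⟩
    simp only [Finset.coe_singleton, Set.mem_inter_iff, Set.mem_singleton_iff] at hz
    exact hx (hz.1 ▸ hz.2)
  obtain ⟨n, p, hp0, hpn, hmem, hadj⟩ := hConn _ (hmemS a ha) _ (hmemS b hb)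
  -- every p i is a subset of Yᶜ
  have hsub : ∀ i ≤ n, ∀ x ∈ p i, x ∈ (Yᶜ : Set X) := by
    intro i hi x hx hxy
    exact (hmem i hi).2 ⟨(hmem i hi).1, x, by simpa using ⟨hx, hxy⟩⟩
  -- by induction, every point of p i is chained to a in Yᶜ
  have key : ∀ i ≤ n, ∀ x ∈ p i, Chain κ Yᶜ a x := by
    intro i
    induction i with
    | zero =>
      intro _ x hx
      rw [hp0] at hx
      simp only [Finset.mem_singleton] at hx
      subst hx
      exact chain_refl κ ha
    | succ i ih =>
      intro hi x hx
      have hi' : i ≤ n := Nat.le_of_succ_le hi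
      rcases hadj i (Nat.lt_of_succ_le hi) with hA | hE
      · obtain ⟨a₀, ha₀, hxa₀⟩ := hA.2.2 x hx
        refine chain_snoc (ih hi' a₀ ha₀) (hsub _ hi x hx) ?_
        rcases hxa₀ with h | h
        · exact Or.inl (hκsymm _ _ h)
        · exact Or.inr h.symm
      · exact ih hi' x (hE ▸ hx)
  obtain ⟨m, q, hq0, hqm, hqmem, hqadj⟩ := key n le_rfl b (by rw [hpn]; simp)
  obtain ⟨i, hi, hbad⟩ := hnochain m q hq0 hqm hqmem
  exact hbad (hqadj i hi)
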